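/- Let p ∈ [0,1], a, d ≥ 0, and B > 0 with d ≤ B and a < B < a + d. Then ((1-p)·min(B,a) + p·min(B, a+d)) / min(B, a + d·p) ≥ (4 - d/B)/4 ≥ 3/4. -/

import Mathlib

theorem stmt_15 (p a d B : ℝ) (hp0 : 0 ≤ p) (hp1 : p ≤ 1) (ha : 0 ≤ a) (hd : 0 ≤ d)
    (hB : 0 < B) (hdB : d ≤ B) (haB : a < B) (hBad : B < a + d) :
    ((1 - p) * min B a + p * min B (a + d)) / min B (a + d * p) ≥ (4 - d / B) / 4 ∧
    (4 - d / B) / 4 ≥ 3 / 4 := by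
  have ha' : 0 < a := by linarith
  have hdp : 0 ≤ d * p := mul_nonneg hd hp0
  have hdB' : d / B ≤ 1 := (div_le_one hB).mpr hdB
  refine ⟨?_, by linarith⟩
  rw [min_eq_right haB.le, min_eq_left hBad.le]
  have hRHS : (4 - d / B) / 4 = (4 * B - d) / (4 * B) := by
    field_simp
  rw [hRHS, ge_iff_le]
  rcases le_or_gt (a + d * p) B with h | h
  · rw [min_eq_right h, div_le_div_iff₀ (by positivity) (by linarith)]
    nlinarith [mul_nonneg (mul_nonneg hp0 (by linarith : (0:ℝ) ≤ B - a - d * p)) (by linarith : (0:ℝ) ≤ B - d * (1 - p)), mul_nonneg (mul_nonneg hd (sq_nonneg (1 - 2 * p))) (by linarith : (0:ℝ) ≤ a + d * p)]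
  · rw [min_eq_left h.le, div_le_div_iff₀ (by positivity) hB]
    nlinarith [mul_nonneg (mul_nonneg hd hB.le) (sq_nonneg (1 - 2 * p)), mul_nonneg (mul_nonneg hB.le (sub_nonneg.mpr hp1)) (by linarith : (0:ℝ) ≤ a + d * p - B)]
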